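/- arXiv:1905.07924 — 2 statements merged into one kernel-verified Lean document; each statement's English description precedes it below -/
import Mathlib

section
/- Let j and k be positive integers with j ≤ k, let 𝒜 be a collection of j-element subsets of {1, …, k}, and let ξ₁, …, ξ_k be vectors in ℤ^j such that for every {i₁, …, i_j} ∈ 𝒜 the vectors ξ_{i₁}, …, ξ_{i_j} are linearly independent over ℤ. Then there exists a primitive vector ξ₀ ∈ ℤ^j such that for every I = {i₁, …, i_j} ∈ 𝒜 and every ℓ ∈ I, the j vectors obtained from {ξ_i : i ∈ I} by deleting ξ_ℓ and adjoining ξ₀ (i.e., ξ₀ together with the ξ_i for i ∈ I \ {ℓ}) are linearly independent over ℤ. -/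
set_option maxHeartbeats 1000000


/-- A vector `x ∈ ℤ^j` is primitive if it is nonzero and whenever `x = d • y`
with `d : ℤ` and `y : ℤ^j`, the integer `d` is a unit. -/
def IsPrimitiveVec {j : ℕ} (x : Fin j → ℤ) : Prop :=
  x ≠ 0 ∧ ∀ (d : ℤ) (y : Fin j → ℤ), x = d • y → IsUnit d

theorem exists_primitive_complement
    (j k : ℕ) (hj : 0 < j) (hk : 0 < k) (hjk : j ≤ k)
    (𝒜 : Set (Finset (Fin k))) (hcard : ∀ I ∈ 𝒜, I.card = j)
    (ξ : Fin k → (Fin j → ℤ))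
    (hind : ∀ I ∈ 𝒜, LinearIndependent ℤ (fun i : I => ξ i)) :
    ∃ ξ₀ : Fin j → ℤ, IsPrimitiveVec ξ₀ ∧
      ∀ I ∈ 𝒜, ∀ ℓ ∈ I,
        LinearIndependent ℤ
          (fun o : Option {i // i ∈ I.erase ℓ} => o.elim ξ₀ (fun i => ξ i.1)) := by
  classical
  haveI : Nonempty (Fin j) := ⟨⟨0, hj⟩⟩
  -- the coordinatewise cast map ℤ^j → ℚ^j
  let f : (Fin j → ℤ) →ₗ[ℤ] (Fin j → ℚ) :=
    { toFun := fun x m => (x m : ℚ)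
      map_add' := fun x y => by funext m; push_cast [Pi.add_apply]; ring
      map_smul' := fun c x => by
        funext m
        simp }
  have hf : Function.Injective f := by
    intro x y h
    funext m
    have : ((x m : ℚ)) = (y m : ℚ) := congrFun h m
    exact_mod_cast this
  -- the finitely many proper subspaces to avoid
  let W : Finset (Fin k) × Fin k → Submodule ℚ (Fin j → ℚ) :=
    fun p => Submodule.span ℚ ((fun i => f (ξ i)) '' ↑(p.1.erase p.2))
  have hWne : ∀ I ∈ 𝒜, ∀ ℓ ∈ I, W (I, ℓ) ≠ ⊤ := by
    intro I hI ℓ hℓ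
    refine (span_lt_top_of_card_lt_finrank ?_).ne
    show ((fun i => f (ξ i)) '' ↑(I.erase ℓ)).toFinset.card < _
    have h1 : ((fun i => f (ξ i)) '' ↑(I.erase ℓ)).toFinset.card ≤ (I.erase ℓ).card := by
      rw [Set.toFinset_image, Finset.toFinset_coe]
      exact Finset.card_image_le
    have h2 : (I.erase ℓ).card = j - 1 := by
      rw [Finset.card_erase_of_mem hℓ, hcard I hI]
    rw [Module.finrank_fin_fun]
    omega
  let P : Finset (Finset (Fin k) × Fin k) :=
    Finset.univ.filter fun p => p.1 ∈ 𝒜 ∧ p.2 ∈ p.1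
  let S : Finset (Submodule ℚ (Fin j → ℚ)) := insert ⊥ (P.image W)
  have htop : ⊤ ∉ S := by
    simp only [S, P, Finset.mem_insert, Finset.mem_image, Finset.mem_filter,
      Finset.mem_univ, true_and]
    push_neg
    constructor
    · exact fun h => absurd h.symm bot_ne_top
    · rintro ⟨I, ℓ⟩ ⟨hI, hℓ⟩
      exact hWne I hI ℓ hℓ
  have hcover := Subspace.biUnion_ne_univ_of_top_notMem htop
  rw [Ne, Set.eq_univ_iff_forall] at hcover
  push_neg at hcover
  obtain ⟨v, hv⟩ := hcover
  have hv' : ∀ q ∈ S, v ∉ q := by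
    intro q hq hvq
    exact hv (Set.mem_biUnion hq hvq)
  have hv0 : v ≠ 0 := by
    intro h
    exact hv' ⊥ (Finset.mem_insert_self _ _) (h ▸ Submodule.zero_mem ⊥)
  have hvW : ∀ I ∈ 𝒜, ∀ ℓ ∈ I, v ∉ W (I, ℓ) := by
    intro I hI ℓ hℓ
    refine hv' _ (Finset.mem_insert_of_mem (Finset.mem_image_of_mem W ?_))
    simp [P, hI, hℓ]
  -- clear denominators
  obtain ⟨b, hb⟩ := IsLocalization.exist_integer_multiples_of_finite
    (nonZeroDivisors ℤ) (S := ℚ) v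
  choose x hx using fun m => (hb m)
  have hbQ : ((b : ℤ) : ℚ) ≠ 0 := by
    exact_mod_cast nonZeroDivisors.coe_ne_zero b
  have hfx : f x = ((b : ℤ) : ℚ) • v := by
    funext m
    have := hx m
    simp only [algebraMap_int_eq, eq_intCast] at this
    simpa [f, zsmul_eq_mul] using this
  have hx0 : x ≠ 0 := by
    intro h
    apply hv0
    have : ((b : ℤ) : ℚ) • v = 0 := by rw [← hfx, h, map_zero]
    exact (smul_eq_zero.mp this).resolve_left hbQ
  -- extract gcd
  obtain ⟨y, hxy, hgcd⟩ := Finset.extract_gcd x (Finset.univ_nonempty (α := Fin j))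
  set g : ℤ := Finset.univ.gcd x with hg
  have hg0 : g ≠ 0 := by
    intro h
    apply hx0
    funext m
    have := Finset.gcd_eq_zero_iff.mp (hg ▸ h) m (Finset.mem_univ m)
    simpa using this
  have hfy : f x = (g : ℚ) • f y := by
    funext m
    have := hxy m (Finset.mem_univ m)
    simp only [f, Pi.smul_apply, smul_eq_mul, LinearMap.coe_mk, AddHom.coe_mk]
    rw [this]
    push_cast
    ring
  -- primitivity of y
  have hy0 : y ≠ 0 := by
    intro h
    have hz : Finset.univ.gcd y = 0 :=
      Finset.gcd_eq_zero_iff.mpr fun m _ => by rw [h]; rfl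
    rw [hgcd] at hz
    exact one_ne_zero hz
  have hyprim : IsPrimitiveVec y := by
    refine ⟨hy0, fun d z hz => ?_⟩
    refine isUnit_of_dvd_one ?_
    rw [← hgcd]
    refine Finset.dvd_gcd fun m _ => ?_
    exact ⟨z m, by rw [hz]; simp⟩
  -- f y avoids all the subspaces
  have hyW : ∀ I ∈ 𝒜, ∀ ℓ ∈ I, f y ∉ W (I, ℓ) := by
    intro I hI ℓ hℓ hmem
    apply hvW I hI ℓ hℓ
    have h1 : f x ∈ W (I, ℓ) := hfy ▸ Submodule.smul_mem _ _ hmem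
    have h2 : v = (((b : ℤ) : ℚ))⁻¹ • f x := by
      rw [hfx, inv_smul_smul₀ hbQ]
    rw [h2]
    exact Submodule.smul_mem _ _ h1
  refine ⟨y, hyprim, fun I hI ℓ hℓ => ?_⟩
  -- linear independence over ℚ of the erased family
  have hZI : LinearIndependent ℤ (fun i : I => f (ξ i)) :=
    (hind I hI).map' f (LinearMap.ker_eq_bot.mpr hf)
  have hQI : LinearIndependent ℚ (fun i : I => f (ξ i)) :=
    (LinearIndependent.iff_fractionRing ℤ ℚ).mp hZI
  have einj : Function.Injective
      (fun i : {i // i ∈ I.erase ℓ} => (⟨i.1, Finset.mem_of_mem_erase i.2⟩ : I)) := by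
    intro a b hab
    simp only [Subtype.mk.injEq] at hab
    exact Subtype.ext hab
  have hQ' : LinearIndependent ℚ (fun i : {i // i ∈ I.erase ℓ} => f (ξ i.1)) :=
    hQI.comp _ einj
  have hrange : Set.range (fun i : {i // i ∈ I.erase ℓ} => f (ξ i.1)) =
      (fun i => f (ξ i)) '' ↑(I.erase ℓ) := by
    rw [show (fun i : {i // i ∈ I.erase ℓ} => f (ξ i.1)) =
        (fun i => f (ξ i)) ∘ Subtype.val from rfl, Set.range_comp,
      Subtype.range_coe_subtype]
    rfl
  have hnot : f y ∉ Submodule.span ℚ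
      (Set.range (fun i : {i // i ∈ I.erase ℓ} => f (ξ i.1))) := by
    rw [hrange]
    exact hyW I hI ℓ hℓ
  have hQopt := hQ'.option (x := f y) hnot
  have hQopt' : LinearIndependent ℚ
      (fun o : Option {i // i ∈ I.erase ℓ} => f (o.elim y (fun i => ξ i.1))) := by
    have heq : (fun o : Option {i // i ∈ I.erase ℓ} => f (o.elim y (fun i => ξ i.1))) =
        (fun o => Option.casesOn' o (f y) (fun i : {i // i ∈ I.erase ℓ} => f (ξ i.1))) := by
      funext o; cases o <;> rfl
    rw [heq]
    exact hQopt
  have hZopt : LinearIndependent ℤ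
      (fun o : Option {i // i ∈ I.erase ℓ} => f (o.elim y (fun i => ξ i.1))) :=
    (LinearIndependent.iff_fractionRing ℤ ℚ).mpr hQopt'
  exact LinearIndependent.of_comp f hZopt
end

section
/- Let N be a saturated submodule of ℤ^n, i.e., whenever m • x ∈ N for some nonzero integer m and x ∈ ℤ^n, then x ∈ N. Let ι : ℤ^n → ℝ^n be the componentwise coercion, let V = span_ℝ(ι(N)) ⊆ ℝ^n, and let L = ι(N) viewed as an additive subgroup of V. Then the additive group homomorphism V / L → ℝ^n / ι(ℤ^n) induced by the inclusion V ↪ ℝ^n is injective. -/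
/-- The componentwise coercion `ι : ℤ^n → ℝ^n` as an additive group homomorphism. -/
def iotaHom (n : ℕ) : (Fin n → ℤ) →+ (Fin n → ℝ) where
  toFun x := fun i => (x i : ℝ)
  map_zero' := by funext i; simp
  map_add' x y := by funext i; simp

/-- The componentwise coercion as a `ℤ`-linear map. -/
def iotaLin (n : ℕ) : (Fin n → ℤ) →ₗ[ℤ] (Fin n → ℝ) where
  toFun x := fun i => (x i : ℝ)
  map_add' x y := by funext i; simp
  map_smul' m x := by funext i; simp

lemma iotaHom_eq_lin (n : ℕ) (x : Fin n → ℤ) : iotaHom n x = iotaLin n x := rfl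

lemma mem_of_iota_mem_span (n : ℕ) (N : Submodule ℤ (Fin n → ℤ))
    (hsat : ∀ (m : ℤ) (x : Fin n → ℤ), m ≠ 0 → m • x ∈ N → x ∈ N)
    (y : Fin n → ℤ)
    (hy : iotaHom n y ∈ Submodule.span ℝ (⇑(iotaHom n) '' (N : Set (Fin n → ℤ)))) :
    y ∈ N := by
  obtain ⟨r, bM, bN, f, a, hsnf⟩ := N.smithNormalForm (Pi.basisFun ℤ (Fin n))
  have ha : ∀ i, a i ≠ 0 := by
    intro i h
    apply bN.ne_zero i
    have : (bN i : Fin n → ℤ) = 0 := by rw [hsnf i, h, zero_smul]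
    exact Subtype.ext this
  have hbMf : ∀ i, bM (f i) ∈ N := fun i =>
    hsat (a i) _ (ha i) (by rw [← hsnf i]; exact (bN i).2)
  set S : Set (Fin n → ℝ) := Set.range (fun i => iotaLin n (bM (f i))) with hS
  have hspan : Submodule.span ℝ (⇑(iotaHom n) '' (N : Set (Fin n → ℤ)))
      ≤ Submodule.span ℝ S := by
    rw [Submodule.span_le]
    rintro _ ⟨x, hx, rfl⟩
    have hx2 : x ∈ Submodule.span ℤ (Set.range fun i => a i • bM (f i)) := by
      have h1 : (⟨x, hx⟩ : N) ∈ Submodule.span ℤ (Set.range bN) := by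
        rw [bN.span_eq]; trivial
      have h2 := Submodule.mem_map_of_mem (f := N.subtype) h1
      rw [Submodule.map_span, ← Set.range_comp] at h2
      convert h2 using 3
      funext i
      exact (hsnf i).symm
      rfl
    have hle : Submodule.span ℤ (Set.range fun i => a i • bM (f i)) ≤
        ((Submodule.span ℝ S).restrictScalars ℤ).comap (iotaLin n) := by
      rw [Submodule.span_le]
      rintro _ ⟨i, rfl⟩
      simp only [Submodule.mem_comap, Submodule.restrictScalars_mem, map_smul]
      exact Submodule.smul_mem _ _ (Submodule.subset_span ⟨i, rfl⟩)
    exact hle hx2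
  have hy' : iotaLin n y ∈ Submodule.span ℝ S := hspan hy
  have hcoord : ∀ j, j ∉ Set.range f → bM.repr y j = 0 := by
    intro j hj
    set φ : (Fin n → ℝ) →ₗ[ℝ] ℝ :=
      ∑ k, ((bM.coord j (fun l => if k = l then 1 else 0) : ℤ) : ℝ) • LinearMap.proj k with hφ
    have hφapp : ∀ v : Fin n → ℝ,
        φ v = ∑ k, ((bM.coord j (fun l => if k = l then 1 else 0) : ℤ) : ℝ) * v k := by
      intro v
      rw [hφ, LinearMap.sum_apply]
      simp [LinearMap.smul_apply, LinearMap.proj_apply]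
    have hφι : ∀ x : Fin n → ℤ, φ (iotaLin n x) = ((bM.coord j x : ℤ) : ℝ) := by
      intro x
      rw [LinearMap.pi_apply_eq_sum_univ (bM.coord j) x, hφapp]
      push_cast
      refine Finset.sum_congr rfl fun k _ => ?_
      simp [iotaLin, mul_comm]
    have hφS : Submodule.span ℝ S ≤ LinearMap.ker φ := by
      rw [Submodule.span_le]
      rintro _ ⟨i, rfl⟩
      have hfij : f i ≠ j := fun h => hj ⟨i, h⟩
      simp only [SetLike.mem_coe, LinearMap.mem_ker]
      rw [hφι]
      simp [Module.Basis.coord_apply, Module.Basis.repr_self, Finsupp.single_apply, hfij]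
    have h0 : φ (iotaLin n y) = 0 := hφS hy'
    rw [hφι] at h0
    exact_mod_cast h0
  rw [← bM.sum_repr y]
  apply Submodule.sum_mem
  intro j _
  by_cases hj : j ∈ Set.range f
  · obtain ⟨i, rfl⟩ := hj
    exact Submodule.smul_mem _ _ (hbMf i)
  · rw [hcoord j hj, zero_smul]
    exact N.zero_mem

theorem injective_quotient_map_of_saturated
    (n : ℕ) (N : Submodule ℤ (Fin n → ℤ))
    (hsat : ∀ (m : ℤ) (x : Fin n → ℤ), m ≠ 0 → m • x ∈ N → x ∈ N)
    (V : Submodule ℝ (Fin n → ℝ))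
    (hV : V = Submodule.span ℝ (⇑(iotaHom n) '' (N : Set (Fin n → ℤ))))
    (L : AddSubgroup V)
    (hL : L = AddSubgroup.comap V.toAddSubgroup.subtype
            (AddSubgroup.map (iotaHom n) N.toAddSubgroup)) :
    Function.Injective
      (QuotientAddGroup.map L (iotaHom n).range V.toAddSubgroup.subtype
        (by subst hL; rintro x ⟨y, hy, h⟩; exact ⟨y, h⟩)) := by
  subst hL
  intro x y
  refine QuotientAddGroup.induction_on x fun a => QuotientAddGroup.induction_on y fun b h => ?_
  rw [QuotientAddGroup.map_mk, QuotientAddGroup.map_mk, QuotientAddGroup.eq] at h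
  rw [QuotientAddGroup.eq]
  obtain ⟨z, hz⟩ := h
  have hz' : iotaHom n z = ((-a + b : V) : Fin n → ℝ) := by
    rw [hz]; push_cast; rfl
  have hzV : iotaHom n z ∈ Submodule.span ℝ (⇑(iotaHom n) '' (N : Set (Fin n → ℤ))) := by
    rw [hz', ← hV]
    exact (-a + b : V).2
  have hzN := mem_of_iota_mem_span n N hsat z hzV
  exact ⟨z, hzN, hz'⟩
end
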